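/- Let u, v, w be pairwise distinct primes and let u', v', w' be pairwise distinct primes. If u·√v/√w = u'·√v'/√w' (as real numbers), then u = u', v = v', and w = w'. -/
import Mathlib

set_option maxHeartbeats 2000000


/-- For pairwise distinct primes `u, v, w` and pairwise distinct primes
`u', v', w'`, the equality `u√v/√w = u'√v'/√w'` forces `(u,v,w) = (u',v',w')`. -/
theorem prime_sqrt_ratio_injective
    (u v w u' v' w' : ℕ)
    (hu : Nat.Prime u) (hv : Nat.Prime v) (hw : Nat.Prime w)
    (hu' : Nat.Prime u') (hv' : Nat.Prime v') (hw' : Nat.Prime w')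
    (huv : u ≠ v) (huw : u ≠ w) (hvw : v ≠ w)
    (huv' : u' ≠ v') (huw' : u' ≠ w') (hvw' : v' ≠ w')
    (heq : (u : ℝ) * Real.sqrt v / Real.sqrt w =
           (u' : ℝ) * Real.sqrt v' / Real.sqrt w') :
    u = u' ∧ v = v' ∧ w = w' := by
  have hwpos : (0:ℝ) < Real.sqrt w := Real.sqrt_pos.2 (by exact_mod_cast hw.pos)
  have hw'pos : (0:ℝ) < Real.sqrt w' := Real.sqrt_pos.2 (by exact_mod_cast hw'.pos)
  have h1 : (u:ℝ) * Real.sqrt v * Real.sqrt w' = (u':ℝ) * Real.sqrt v' * Real.sqrt w :=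
    (div_eq_div_iff hwpos.ne' hw'pos.ne').1 heq
  have h2 : ((u:ℝ) * Real.sqrt v * Real.sqrt w')^2 = ((u':ℝ) * Real.sqrt v' * Real.sqrt w)^2 := by
    rw [h1]
  have hv0 : (0:ℝ) ≤ (v:ℝ) := by positivity
  have hv'0 : (0:ℝ) ≤ (v':ℝ) := by positivity
  have hw0 : (0:ℝ) ≤ (w:ℝ) := by positivity
  have hw'0 : (0:ℝ) ≤ (w':ℝ) := by positivity
  have h3 : (u:ℝ)^2 * v * w' = (u':ℝ)^2 * v' * w := by
    rw [← Real.sq_sqrt hv0, ← Real.sq_sqrt hv'0, ← Real.sq_sqrt hw0, ← Real.sq_sqrt hw'0]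
    linear_combination h2
  have h4 : u^2 * v * w' = u'^2 * v' * w := by exact_mod_cast h3
  have key : ∀ p : ℕ,
      2 * (if u = p then 1 else 0) + (if v = p then 1 else 0) + (if w' = p then 1 else 0)
      = 2 * (if u' = p then 1 else 0) + (if v' = p then 1 else 0) + (if w = p then 1 else 0) := by
    intro p
    have := congrArg (fun n => n.factorization p) h4
    simpa [Nat.factorization_mul, Nat.factorization_pow, hu.factorization, hv.factorization,
      hw.factorization, hu'.factorization, hv'.factorization, hw'.factorization,
      Finsupp.single_apply, pow_ne_zero, hu.ne_zero, hv.ne_zero, hw.ne_zero,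
      hu'.ne_zero, hv'.ne_zero, hw'.ne_zero, mul_ne_zero, two_mul] using this
  have k1 := key u
  have k2 := key v
  have k3 := key w
  have k4 := key u'
  have k5 := key v'
  have k6 := key w'
  simp only [if_pos rfl, huv, huw, hvw, huv', huw', hvw', Ne.symm huv, Ne.symm huw,
    Ne.symm hvw, Ne.symm huv', Ne.symm huw', Ne.symm hvw', if_false, eq_comm]
    at k1 k2 k3 k4 k5 k6
  simp only [if_true] at k1 k2 k3 k4 k5 k6
  split_ifs at k1 k2 k3 k4 k5 k6 <;> omega
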